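/- For any matrix A ∈ M_n(ℂ) there exist a diagonal matrix D with the same characteristic polynomial as A, a matrix C ∈ M_n(ℂ), and a strictly upper triangular matrix U, such that A = exp(-C)(D + U)exp(C). Moreover, for every ζ ∈ ℂ, the matrix f(ζ) := exp(-Cζ)(D + ζU)exp(Cζ) has the same characteristic polynomial as A. -/

import Mathlib

open Polynomial in
lemma charpoly_units_conj' {n : ℕ} (u : (Matrix (Fin n) (Fin n) ℂ)ˣ) (M : Matrix (Fin n) (Fin n) ℂ) :
    ((u : Matrix (Fin n) (Fin n) ℂ) * M * (↑u⁻¹ : Matrix (Fin n) (Fin n) ℂ)).charpoly = M.charpoly := by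
  let f : Matrix (Fin n) (Fin n) ℂ →+* Matrix (Fin n) (Fin n) ℂ[X] :=
    (Polynomial.C : ℂ →+* ℂ[X]).mapMatrix
  let u' : (Matrix (Fin n) (Fin n) ℂ[X])ˣ := Units.map f.toMonoidHom u
  have key : Matrix.charmatrix ((u : Matrix (Fin n) (Fin n) ℂ) * M * (↑u⁻¹ : Matrix (Fin n) (Fin n) ℂ))
      = (u' : Matrix (Fin n) (Fin n) ℂ[X]) * M.charmatrix * (↑u'⁻¹ : Matrix (Fin n) (Fin n) ℂ[X]) := by
    unfold Matrix.charmatrix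
    rw [mul_sub, sub_mul]
    congr 1
    · have hc : Commute ((Matrix.scalar (Fin n)) (X : ℂ[X])) (u' : Matrix (Fin n) (Fin n) ℂ[X]) :=
        (Matrix.scalar_commute _ (fun r => Commute.all _ _) _)
      rw [← hc.eq, mul_assoc]
      rw [show (u' : Matrix (Fin n) (Fin n) ℂ[X]) * (↑u'⁻¹ : Matrix (Fin n) (Fin n) ℂ[X]) = 1 from u'.mul_inv]
      rw [mul_one]
    · show f _ = (u' : Matrix (Fin n) (Fin n) ℂ[X]) * f M * (↑u'⁻¹ : Matrix (Fin n) (Fin n) ℂ[X])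
      rw [map_mul, map_mul]
      rfl
  rw [Matrix.charpoly, Matrix.charpoly, key, Matrix.det_mul, Matrix.det_mul]
  rw [mul_comm, ← mul_assoc, ← Matrix.det_mul,
    show (↑u'⁻¹ : Matrix (Fin n) (Fin n) ℂ[X]) * (u' : Matrix (Fin n) (Fin n) ℂ[X]) = 1 from u'.inv_mul,
    Matrix.det_one, one_mul]

lemma schur_aux : ∀ (m : ℕ) (A : Matrix (Fin m) (Fin m) ℂ),
    ∃ P : Matrix (Fin m) (Fin m) ℂ, star P * P = 1 ∧ P * star P = 1 ∧
      ∀ i j : Fin m, j < i → (star P * A * P) i j = 0 := by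
  intro m
  induction m with
  | zero => exact fun A => ⟨1, by simp, by simp, fun i _ _ => i.elim0⟩
  | succ m ih =>
    intro A
    obtain ⟨μ, hμ⟩ := Module.End.exists_eigenvalue (Matrix.toLin' A)
    obtain ⟨v, hv⟩ := hμ.exists_hasEigenvector
    have hv0 : v ≠ 0 := hv.right
    have hAv : A.mulVec v = μ • v := by
      have := hv.apply_eq_smul
      rwa [Matrix.toLin'_apply] at this
    set w : EuclideanSpace ℂ (Fin (m+1)) := (WithLp.equiv 2 (Fin (m+1) → ℂ)).symm v with hw
    have hw0 : w ≠ 0 := by simpa [hw] using hv0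
    set u : EuclideanSpace ℂ (Fin (m+1)) := (‖w‖⁻¹ : ℂ) • w with hu
    have hnu : ‖u‖ = 1 := by
      rw [hu, norm_smul]
      simp [norm_ne_zero_iff.mpr hw0]
    have hAu : A.mulVec (u : Fin (m+1) → ℂ) = μ • (u : Fin (m+1) → ℂ) := by
      show A.mulVec ((‖w‖⁻¹ : ℂ) • v) = μ • ((‖w‖⁻¹ : ℂ) • v)
      rw [Matrix.mulVec_smul, hAv, smul_comm]
    have hortho : Orthonormal ℂ (({0} : Set (Fin (m+1))).restrict (fun _ => u)) := by
      constructor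
      · intro i; exact hnu
      · intro i j hij
        exact absurd (Subtype.ext (by
          have hi := i.2; have hj := j.2
          simp only [Set.mem_singleton_iff] at hi hj
          rw [hi, hj])) hij
    obtain ⟨b, hb⟩ := hortho.exists_orthonormalBasis_extension_of_card_eq (by simp)
    have hb0 : b 0 = u := hb 0 rfl
    -- the first unitary
    set P₁ : Matrix (Fin (m+1)) (Fin (m+1)) ℂ :=
      Matrix.of (fun i j : Fin (m+1) => (b j : Fin (m+1) → ℂ) i) with hP₁def
    have hP₁ : star P₁ * P₁ = 1 := by
      ext i j
      rw [Matrix.mul_apply, Matrix.one_apply]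
      have := orthonormal_iff_ite.mp b.orthonormal i j
      rw [PiLp.inner_apply] at this
      simp only [RCLike.inner_apply] at this
      simpa [hP₁def, Matrix.star_apply, mul_comm] using this
    have hP₁' : P₁ * star P₁ = 1 := mul_eq_one_comm.mp hP₁
    set B : Matrix (Fin (m+1)) (Fin (m+1)) ℂ := star P₁ * A * P₁ with hBdef
    have hBcol : ∀ i, B i 0 = if i = 0 then μ else 0 := by
      intro i
      have expand : B i 0 = ∑ k, (starRingEnd ℂ) ((b i : Fin (m+1) → ℂ) k)
          * (A.mulVec (u : Fin (m+1) → ℂ)) k := by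
        rw [hBdef, mul_assoc, Matrix.mul_apply]
        congr 1; ext k
        rw [Matrix.mul_apply]
        simp only [hP₁def, Matrix.star_apply, Matrix.of_apply, Matrix.mulVec, dotProduct,
          hb0, Finset.mul_sum]
        rfl
      rw [expand]
      have : ∑ k, (starRingEnd ℂ) ((b i : Fin (m+1) → ℂ) k) * (μ • (u : Fin (m+1) → ℂ)) k
          = μ * inner ℂ (b i) (b 0) := by
        rw [PiLp.inner_apply, hb0, Finset.mul_sum]
        refine Finset.sum_congr rfl fun k _ => ?_
        simp only [RCLike.inner_apply, PiLp.smul_apply, Pi.smul_apply, smul_eq_mul]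
        ring
      rw [hAu, this, orthonormal_iff_ite.mp b.orthonormal i 0]
      simp
    -- inductive step on the lower-right block
    set A' : Matrix (Fin m) (Fin m) ℂ := Matrix.of (fun i j : Fin m => B i.succ j.succ) with hA'def
    obtain ⟨P₂, h₂l, h₂r, h₂tri⟩ := ih A'
    -- the block-diagonal unitary [[1,0],[0,P₂]]
    set Q : Matrix (Fin (m+1)) (Fin (m+1)) ℂ := Matrix.of (fun i j : Fin (m+1) =>
      if hi : i = 0 then (if j = 0 then 1 else 0)
      else if hj : j = 0 then 0 else P₂ (i.pred hi) (j.pred hj)) with hQdef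
    have hQ00 : Q 0 0 = 1 := by simp [hQdef]
    have hQ0s : ∀ j : Fin m, Q 0 j.succ = 0 := by
      intro j; simp [hQdef, Fin.succ_ne_zero j]
    have hQs0 : ∀ i : Fin m, Q i.succ 0 = 0 := by
      intro i; simp [hQdef, Fin.succ_ne_zero i]
    have hQss : ∀ i j : Fin m, Q i.succ j.succ = P₂ i j := by
      intro i j; simp [hQdef, Fin.succ_ne_zero i, Fin.succ_ne_zero j]
    have hQ : star Q * Q = 1 := by
      ext i j
      rw [Matrix.mul_apply, Fin.sum_univ_succ]
      simp only [Matrix.star_apply]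
      induction i using Fin.cases with
      | zero =>
        induction j using Fin.cases with
        | zero => simp [hQ00, hQs0]
        | succ j' => simp [hQ00, hQ0s, hQs0, Matrix.one_apply, (Fin.succ_ne_zero j').symm]
      | succ i' =>
        induction j using Fin.cases with
        | zero => simp [hQ00, hQ0s, hQs0, Matrix.one_apply, Fin.succ_ne_zero i']
        | succ j' =>
          have := congrFun (congrFun h₂l i') j'
          rw [Matrix.mul_apply] at this
          simp only [Matrix.star_apply] at this
          simp only [hQ0s, hQss, star_zero, zero_mul, zero_add]
          rw [this, Matrix.one_apply, Matrix.one_apply]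
          simp [Fin.succ_inj]
    have hQ' : Q * star Q = 1 := mul_eq_one_comm.mp hQ
    refine ⟨P₁ * Q, ?_, ?_, ?_⟩
    · rw [StarMul.star_mul, mul_assoc, ← mul_assoc (star P₁), hP₁, one_mul, hQ]
    · rw [StarMul.star_mul, mul_assoc, ← mul_assoc Q, hQ', one_mul, hP₁']
    · intro i j hji
      have hM : star (P₁ * Q) * A * (P₁ * Q) = star Q * B * Q := by
        rw [StarMul.star_mul, hBdef]
        noncomm_ring
      rw [hM]
      -- entry formula
      have hentry : ∀ i j : Fin (m+1), (star Q * B * Q) i j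
          = ∑ l, (∑ k, star (Q k i) * B k l) * Q l j := by
        intro i j
        rw [Matrix.mul_apply]
        refine Finset.sum_congr rfl fun l _ => ?_
        rw [Matrix.mul_apply]
        refine congrArg (· * Q l j) ?_
        exact Finset.sum_congr rfl fun k _ => by rw [Matrix.star_apply]
      induction j using Fin.cases with
      | zero =>
        have hi0 : i ≠ 0 := hji.ne'
        obtain ⟨i', rfl⟩ := Fin.eq_succ_of_ne_zero hi0
        rw [hentry]
        have : ∀ l : Fin (m+1), (∑ k, star (Q k i'.succ) * B k l) * Q l 0
            = (if l = 0 then (∑ k, star (Q k i'.succ) * B k l) else 0) := by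
          intro l
          induction l using Fin.cases with
          | zero => simp [hQ00]
          | succ l' => simp [hQs0, Fin.succ_ne_zero l']
        rw [Finset.sum_congr rfl (fun l _ => this l), Finset.sum_ite_eq' _ 0]
        simp only [Finset.mem_univ, if_true]
        rw [Fin.sum_univ_succ]
        simp [hQ0s, hBcol, Fin.succ_ne_zero]
      | succ j' =>
        have hi0 : i ≠ 0 := (lt_of_le_of_lt (Fin.zero_le _) hji).ne'
        obtain ⟨i', rfl⟩ := Fin.eq_succ_of_ne_zero hi0
        have hj'i' : j' < i' := by
          rwa [Fin.succ_lt_succ_iff] at hji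
        rw [hentry]
        have step1 : ∑ l, (∑ k, star (Q k i'.succ) * B k l) * Q l j'.succ
            = ∑ l' : Fin m, (∑ k' : Fin m, star (P₂ k' i') * B k'.succ l'.succ) * P₂ l' j' := by
          rw [Fin.sum_univ_succ]
          simp only [hQ0s, mul_zero, zero_add, hQss]
          refine Finset.sum_congr rfl fun l' _ => ?_
          refine congrArg (· * P₂ l' j') ?_
          rw [Fin.sum_univ_succ]
          simp [hQ0s, hQss]
        rw [step1]
        have h0 := h₂tri i' j' hj'i'
        rw [Matrix.mul_apply] at h0
        rw [← h0]
        refine Finset.sum_congr rfl fun l' _ => ?_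
        refine congrArg (· * P₂ l' j') ?_
        rw [Matrix.mul_apply]
        exact Finset.sum_congr rfl fun k' _ => by simp [Matrix.star_apply, hA'def]

lemma unitary_tri_diag {m : ℕ} (Q : Matrix (Fin m) (Fin m) ℂ)
    (h1 : star Q * Q = 1) (h2 : Q * star Q = 1)
    (ht : ∀ i j : Fin m, j < i → Q i j = 0) :
    Q = Matrix.diagonal (fun i => Q i i) ∧ ∀ i, Q i i ≠ 0 := by
  have hbt : Q.BlockTriangular id := fun i j h => ht i j h
  haveI : Invertible Q := invertibleOfLeftInverse _ _ h1
  have hinv : Q⁻¹ = star Q := Matrix.inv_eq_left_inv h1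
  have hbtinv : (Q⁻¹).BlockTriangular id := Matrix.blockTriangular_inv_of_blockTriangular hbt
  have hupper : ∀ i j : Fin m, i < j → Q i j = 0 := by
    intro i j hij
    have := hbtinv (show id i < id j from hij)
    rw [hinv, Matrix.star_apply] at this
    exact star_eq_zero.mp this
  constructor
  · ext i j
    rcases lt_trichotomy i j with h | h | h
    · simp [Matrix.diagonal_apply_ne _ h.ne, hupper i j h]
    · subst h; simp
    · simp [Matrix.diagonal_apply_ne _ h.ne', ht i j h]
  · intro i
    have hdet : Q.det * (star Q).det = 1 := by rw [← Matrix.det_mul, h2, Matrix.det_one]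
    have : Q.det ≠ 0 := left_ne_zero_of_mul_eq_one hdet
    rw [Matrix.det_of_upperTriangular hbt] at this
    exact Finset.prod_ne_zero_iff.mp this i (Finset.mem_univ i)

open NormedSpace

/-- every `A ∈ M_n(ℂ)` can be written as
`A = exp(-C)(D + U)exp(C)` with `D` diagonal having the same characteristic
polynomial as `A`, and `U` strictly upper triangular; moreover the entire curve
`ζ ↦ exp(-Cζ)(D + ζU)exp(Cζ)` has constant characteristic polynomial equal to
that of `A`. -/
theorem exists_conjugation_to_diagonal_plus_nilpotent
    {n : ℕ} (A : Matrix (Fin n) (Fin n) ℂ) :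
    ∃ (d : Fin n → ℂ) (C U : Matrix (Fin n) (Fin n) ℂ),
      (Matrix.diagonal d).charpoly = A.charpoly ∧
      (∀ i j : Fin n, j ≤ i → U i j = 0) ∧
      A = exp (-C) * (Matrix.diagonal d + U) * exp C ∧
      ∀ ζ : ℂ,
        (exp (-(ζ • C)) * (Matrix.diagonal d + ζ • U) * exp (ζ • C)).charpoly
          = A.charpoly := by
  obtain ⟨P, hPl, hPr, hPtri⟩ := schur_aux n A
  set T : Matrix (Fin n) (Fin n) ℂ := star P * A * P with hTdef
  have hA : A = P * T * star P := by
    rw [hTdef]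
    calc A = (P * star P) * A * (P * star P) := by rw [hPr, one_mul, mul_one]
    _ = P * (star P * A * P) * star P := by noncomm_ring
  -- Schur-triangularize P itself
  obtain ⟨R, hRl, hRr, hRtri⟩ := schur_aux n P
  set S : Matrix (Fin n) (Fin n) ℂ := star R * P * R with hSdef
  have hSstar : star S = star R * star P * R := by
    rw [hSdef]; simp [StarMul.star_mul, mul_assoc]
  have hSl : star S * S = 1 := by
    rw [hSstar, hSdef]
    calc star R * star P * R * (star R * P * R)
        = star R * star P * (R * star R) * P * R := by noncomm_ring
      _ = star R * (star P * P) * R := by rw [hRr]; noncomm_ring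
      _ = 1 := by rw [hPl, mul_one, hRl]
  have hSr : S * star S = 1 := mul_eq_one_comm.mp hSl
  obtain ⟨hSdiag, hSne⟩ := unitary_tri_diag S hSl hSr hRtri
  set w : Fin n → ℂ := fun i => S i i with hwdef
  set c : Fin n → ℂ := fun i => Complex.log (w i) with hcdef
  have hcw : NormedSpace.exp c = w := by
    funext i
    rw [Pi.coe_exp, ← Complex.exp_eq_exp_ℂ, hcdef]
    exact Complex.exp_log (hSne i)
  have hexpc : NormedSpace.exp (Matrix.diagonal c) = S := by
    rw [Matrix.exp_diagonal, hcw, ← hSdiag]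
  have hP : P = R * S * star R := by
    rw [hSdef]
    calc P = (R * star R) * P * (R * star R) := by rw [hRr, one_mul, mul_one]
    _ = R * (star R * P * R) * star R := by noncomm_ring
  set C₀ : Matrix (Fin n) (Fin n) ℂ := R * Matrix.diagonal c * star R with hC₀def
  have hexpC₀ : exp C₀ = P := by
    have uR : (Matrix (Fin n) (Fin n) ℂ)ˣ := ⟨R, star R, hRr, hRl⟩
    have := Matrix.exp_units_conj (⟨R, star R, hRr, hRl⟩ : (Matrix (Fin n) (Fin n) ℂ)ˣ)
      (Matrix.diagonal c)
    simp only [Units.inv_mk] at this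
    rw [hC₀def]
    calc exp (R * Matrix.diagonal c * star R) = R * exp (Matrix.diagonal c) * star R := this
      _ = P := by rw [hexpc, hP]
  -- data
  refine ⟨fun i => T i i, -C₀, T - Matrix.diagonal (fun i => T i i), ?_, ?_, ?_, ?_⟩
  · -- charpoly equality
    have h1 : (Matrix.diagonal (fun i => T i i)).charpoly
        = ∏ i : Fin n, (Polynomial.X - Polynomial.C (T i i)) := by
      rw [Matrix.charpoly_of_upperTriangular _ (Matrix.blockTriangular_diagonal _)]
      simp
    have h2 : T.charpoly = ∏ i : Fin n, (Polynomial.X - Polynomial.C (T i i)) :=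
      Matrix.charpoly_of_upperTriangular T (fun i j h => hPtri i j h)
    have h3 : A.charpoly = T.charpoly := by
      have := charpoly_units_conj' (⟨P, star P, hPr, hPl⟩ : (Matrix (Fin n) (Fin n) ℂ)ˣ) T
      simp only [Units.inv_mk] at this
      rw [hA]
      exact this
    rw [h1, h3, h2]
  · intro i j hji
    rcases eq_or_lt_of_le hji with h | h
    · subst h
      simp [Matrix.sub_apply]
    · simp [Matrix.sub_apply, hPtri i j h, Matrix.diagonal_apply_ne _ (ne_of_gt h)]
  · rw [add_sub_cancel]
    rw [neg_neg, hexpC₀]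
    have : exp (-C₀) = star P := by
      rw [Matrix.exp_neg, hexpC₀]
      exact Matrix.inv_eq_left_inv hPl
    rw [this, ← hA]  -- careful ordering
  · intro ζ
    set Dz : Matrix (Fin n) (Fin n) ℂ :=
      Matrix.diagonal (fun i => T i i) + ζ • (T - Matrix.diagonal (fun i => T i i)) with hDz
    have hcomm : Commute (-(ζ • -C₀)) (ζ • -C₀) := (Commute.refl _).neg_left
    have hprod : exp (-(ζ • -C₀)) * exp (ζ • -C₀) = 1 := by
      rw [← Matrix.exp_add_of_commute _ _ hcomm, neg_add_cancel, exp_zero]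
    have hprod' : exp (ζ • -C₀) * exp (-(ζ • -C₀)) = 1 := by
      rw [← Matrix.exp_add_of_commute _ _ hcomm.symm, add_neg_cancel, exp_zero]
    have hconj := charpoly_units_conj'
      (⟨exp (-(ζ • -C₀)), exp (ζ • -C₀), hprod, hprod'⟩ : (Matrix (Fin n) (Fin n) ℂ)ˣ) Dz
    simp only [Units.inv_mk] at hconj
    rw [hconj]
    -- charpoly of Dz
    have htriDz : Dz.BlockTriangular id := by
      intro i j h
      have hne : i ≠ j := fun e => absurd h (by rw [e]; exact lt_irrefl _)
      simp [hDz, Matrix.diagonal_apply_ne _ hne, hPtri i j h, Matrix.sub_apply]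
    have hdiagDz : ∀ i, Dz i i = T i i := by
      intro i
      simp [hDz, Matrix.sub_apply]
    rw [Matrix.charpoly_of_upperTriangular _ htriDz]
    have h2 : T.charpoly = ∏ i : Fin n, (Polynomial.X - Polynomial.C (T i i)) :=
      Matrix.charpoly_of_upperTriangular T (fun i j h => hPtri i j h)
    have h3 : A.charpoly = T.charpoly := by
      have := charpoly_units_conj' (⟨P, star P, hPr, hPl⟩ : (Matrix (Fin n) (Fin n) ℂ)ˣ) T
      simp only [Units.inv_mk] at this
      rw [hA]
      exact this
    rw [h3, h2]
    exact Finset.prod_congr rfl fun i _ => by rw [hdiagDz]
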